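/- Let p be a prime, d ≥ 1, and Φ a d×d matrix over ℤ_p such that det(Φⁿ − Id) ≠ 0 for all n ≥ 1. Then there exists a constant c > 0 such that ‖det(Φⁿ − Id)‖_p ≥ c / n^d for all n ≥ 1 (and trivially ‖det(Φⁿ − Id)‖_p ≤ 1). -/

import Mathlib

variable {p : ℕ} [hp : Fact p.Prime]

open Finset

-- unit: nat coprime to p
lemma aux_isUnit_of_not_dvd {k : ℕ} (hk : ¬ p ∣ k) : IsUnit (k : ℤ_[p]) := by
  rw [PadicInt.isUnit_iff]
  have h1 : ‖(k : ℤ_[p])‖ ≤ 1 := PadicInt.norm_le_one _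
  have h2 : ¬ ‖(k : ℤ_[p])‖ < 1 := by
    rw [show ((k:ℤ_[p])) = ((k : ℤ) : ℤ_[p]) by push_cast; ring,
      PadicInt.norm_int_lt_one_iff_dvd]
    exact_mod_cast hk
  linarith

-- valuation bound: padicValNat p k ≤ k - 1
lemma aux_padicValNat_le {k : ℕ} (hk : 1 ≤ k) : padicValNat p k ≤ k - 1 := by
  have h1 : p ^ padicValNat p k ∣ k := pow_padicValNat_dvd
  have h2 : p ^ padicValNat p k ≤ k := Nat.le_of_dvd hk h1
  have h3 : 2 ^ padicValNat p k ≤ p ^ padicValNat p k :=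
    Nat.pow_le_pow_left hp.out.two_le _
  have h4 : padicValNat p k < 2 ^ padicValNat p k := Nat.lt_two_pow_self
  omega

/-- the key arithmetic fact: `(j+1) * r = p ^ (2*j)` for some `r`, with `p ∣ r` if `j ≥ 1`. -/
lemma aux_exists_r (j : ℕ) : ∃ r : ℤ_[p],
    ((j + 1 : ℕ) : ℤ_[p]) * r = (p : ℤ_[p]) ^ (2 * j) ∧ (1 ≤ j → (p : ℤ_[p]) ∣ r) := by
  set k := j + 1 with hk
  have hk1 : 1 ≤ k := Nat.le_add_left 1 j
  set v := padicValNat p k with hv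
  have hvle : v ≤ j := by have := aux_padicValNat_le (p := p) hk1; omega
  obtain ⟨k', hk'⟩ : ∃ k', k = p ^ v * k' := pow_padicValNat_dvd
  have hk'0 : k' ≠ 0 := by
    intro h0; rw [h0, Nat.mul_zero] at hk'; omega
  have hpk' : ¬ p ∣ k' := by
    intro hdvd
    have : p ^ (v + 1) ∣ k := by
      rw [hk']; rw [pow_succ]
      exact Nat.mul_dvd_mul dvd_rfl hdvd
    have := (padicValNat_dvd_iff_le (p := p) (a := k) (n := v+1) (by omega)).mp this
    omega
  obtain ⟨u, hu⟩ := (aux_isUnit_of_not_dvd (p := p) hpk').exists_right_inv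
  refine ⟨u * (p : ℤ_[p]) ^ (2 * j - v), ?_, ?_⟩
  · have : ((k : ℕ) : ℤ_[p]) = (p : ℤ_[p]) ^ v * (k' : ℕ) := by
      rw [hk']; push_cast; ring
    rw [this]
    calc (p : ℤ_[p]) ^ v * (k' : ℕ) * (u * (p : ℤ_[p]) ^ (2 * j - v))
        = (p : ℤ_[p]) ^ v * (p : ℤ_[p]) ^ (2 * j - v) * ((k' : ℤ_[p]) * u) := by ring
      _ = (p : ℤ_[p]) ^ (2 * j) := by
          rw [hu, mul_one, ← pow_add]
          congr 1
          omega
  · intro hj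
    refine Dvd.dvd.mul_left ?_ u
    exact dvd_pow_self _ (by omega)


variable {p : ℕ} [hp : Fact p.Prime]

open Finset Filter Nat

lemma aux_eq_zero_of_dvd_all {x : ℤ_[p]} (h : ∀ k : ℕ, (p : ℤ_[p]) ^ k ∣ x) : x = 0 := by
  have hb : ∀ k : ℕ, ‖x‖ ≤ ((p : ℝ)⁻¹) ^ k := by
    intro k
    have := (PadicInt.norm_le_pow_iff_mem_span_pow x k).mpr
      (by rw [Ideal.mem_span_singleton]; exact h k)
    calc ‖x‖ ≤ (p : ℝ) ^ (-(k:ℤ)) := this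
      _ = ((p:ℝ)⁻¹) ^ k := by rw [zpow_neg, inv_pow, zpow_natCast]
  have hp1 : (1 : ℝ) < p := by exact_mod_cast hp.out.one_lt
  have htend : Filter.Tendsto (fun k : ℕ => ((p:ℝ)⁻¹) ^ k) Filter.atTop (nhds 0) := by
    apply tendsto_pow_atTop_nhds_zero_of_lt_one
    · positivity
    · rw [inv_lt_one_iff₀]; right; exact hp1
  have : ‖x‖ ≤ 0 := ge_of_tendsto htend (Filter.Eventually.of_forall hb)
  have := norm_nonneg x
  have : ‖x‖ = 0 := le_antisymm ‹‖x‖ ≤ 0› this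
  simpa using this

lemma aux_dvd_of_toZModPow {k : ℕ} {x y : ℤ_[p]}
    (h : PadicInt.toZModPow k x = PadicInt.toZModPow k y) : (p : ℤ_[p]) ^ k ∣ x - y := by
  have : x - y ∈ RingHom.ker (PadicInt.toZModPow (p := p) k) := by
    rw [RingHom.mem_ker, map_sub, h, sub_self]
  rw [PadicInt.ker_toZModPow, Ideal.mem_span_singleton] at this
  exact_mod_cast this

lemma aux_norm_le_of_dvd {x : ℤ_[p]} {k : ℕ} (h : (p : ℤ_[p]) ^ k ∣ x) :
    ‖x‖ ≤ ((p : ℝ)⁻¹) ^ k := by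
  have := (PadicInt.norm_le_pow_iff_mem_span_pow x k).mpr
    (by rw [Ideal.mem_span_singleton]; exact h)
  calc ‖x‖ ≤ (p : ℝ) ^ (-(k:ℤ)) := this
    _ = ((p:ℝ)⁻¹) ^ k := by rw [zpow_neg, inv_pow, zpow_natCast]

lemma aux_closed_dvd (k : ℕ) : IsClosed {x : ℤ_[p] | (p : ℤ_[p]) ^ k ∣ x} := by
  have : {x : ℤ_[p] | (p : ℤ_[p]) ^ k ∣ x} = {x : ℤ_[p] | ‖x‖ ≤ (p : ℝ) ^ (-(k:ℤ))} := by
    ext x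
    simp only [Set.mem_setOf_eq]
    rw [PadicInt.norm_le_pow_iff_mem_span_pow, Ideal.mem_span_singleton]
  rw [this]
  exact isClosed_le continuous_norm continuous_const

/-- Eventual periodicity of powers of a matrix mod `p^k`. -/
lemma aux_period (d : ℕ) (Φ : Matrix (Fin d) (Fin d) ℤ_[p]) (k : ℕ) :
    ∃ a T : ℕ, 0 < T ∧ ∀ x y : ℕ, a ≤ x → a ≤ y → T ∣ x → T ∣ y →
      ∀ i j, (p : ℤ_[p]) ^ k ∣ (Φ ^ x - Φ ^ y) i j := by
  haveI : NeZero (p ^ k) := ⟨pow_ne_zero _ hp.out.ne_zero⟩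
  haveI : Finite (Matrix (Fin d) (Fin d) (ZMod (p ^ k))) := by
    unfold Matrix; infer_instance
  set f : Matrix (Fin d) (Fin d) ℤ_[p] →+* Matrix (Fin d) (Fin d) (ZMod (p ^ k)) :=
    (PadicInt.toZModPow k).mapMatrix with hf
  obtain ⟨a, b, hab, heq⟩ := Finite.exists_ne_map_eq_of_infinite (fun n : ℕ => f Φ ^ n)
  -- wlog a < b
  have key : ∀ a b : ℕ, a < b → f Φ ^ a = f Φ ^ b →
      ∃ a' T : ℕ, 0 < T ∧ ∀ x y : ℕ, a' ≤ x → a' ≤ y → T ∣ x → T ∣ y →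
        ∀ i j, (p : ℤ_[p]) ^ k ∣ (Φ ^ x - Φ ^ y) i j := by
    clear hab heq a b
    intro a b hab heq
    set T := b - a with hT
    have hT0 : 0 < T := by omega
    have step : ∀ n, a ≤ n → f Φ ^ n = f Φ ^ (n + T) := by
      intro n hn
      have h1 : f Φ ^ n = f Φ ^ a * f Φ ^ (n - a) := by
        rw [← pow_add]; congr 1; omega
      have h2 : f Φ ^ (n + T) = f Φ ^ b * f Φ ^ (n - a) := by
        rw [← pow_add]; congr 1; omega
      rw [h1, h2, heq]
    have reach : ∀ c n, a ≤ n → f Φ ^ n = f Φ ^ (n + c * T) := by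
      intro c
      induction c with
      | zero => intro n hn; simp
      | succ m ih =>
          intro n hn
          have := step (n + m * T) (by omega)
          rw [← ih n hn] at this
          rw [this]; congr 1; ring
    have main : ∀ x y : ℕ, a ≤ x → x ≤ y → T ∣ y - x → f Φ ^ x = f Φ ^ y := by
      intro x y hax hxy ⟨c, hc⟩
      have : y = x + c * T := by rw [mul_comm]; omega
      rw [this, ← reach c x hax]
    refine ⟨a, T, hT0, ?_⟩
    intro x y hax hay hTx hTy i j
    have hfeq : f Φ ^ x = f Φ ^ y := by
      rcases le_or_gt x y with hxy | hxy
      · exact main x y hax hxy (Nat.dvd_sub hTy hTx)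
      · exact (main y x hay (le_of_lt hxy) (Nat.dvd_sub hTx hTy)).symm
    have hfeq' : PadicInt.toZModPow k ((Φ ^ x) i j) = PadicInt.toZModPow k ((Φ ^ y) i j) := by
      have : f (Φ ^ x) = f (Φ ^ y) := by rw [map_pow, map_pow, hfeq]
      have := congrFun (congrFun this i) j
      simpa [hf, RingHom.mapMatrix_apply, Matrix.map_apply] using this
    have := aux_dvd_of_toZModPow hfeq'
    simpa [Matrix.sub_apply] using this
  rcases Nat.lt_or_ge a b with hlt | hge
  · exact key a b hlt heq
  · exact key b a (by omega) heq.symm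

lemma aux_matmul_dvd_left {d : ℕ} {c : ℤ_[p]} {A B : Matrix (Fin d) (Fin d) ℤ_[p]}
    (h : ∀ i j, c ∣ A i j) : ∀ i j, c ∣ (A * B) i j := by
  intro i j
  rw [Matrix.mul_apply]
  exact Finset.dvd_sum fun l _ => (h i l).mul_right _

lemma aux_matmul_dvd_right {d : ℕ} {c : ℤ_[p]} {A B : Matrix (Fin d) (Fin d) ℤ_[p]}
    (h : ∀ i j, c ∣ B i j) : ∀ i j, c ∣ (A * B) i j := by
  intro i j
  rw [Matrix.mul_apply]
  exact Finset.dvd_sum fun l _ => (h l j).mul_left _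

lemma aux_exists_idem (d : ℕ) (Φ : Matrix (Fin d) (Fin d) ℤ_[p]) :
    ∃ E : Matrix (Fin d) (Fin d) ℤ_[p], E * E = E ∧ Φ * E = E * Φ ∧
      ∀ k : ℕ, ∃ N : ℕ, 1 ≤ N ∧ ∀ i j, (p : ℤ_[p]) ^ k ∣ (Φ ^ N - E) i j := by
  have hp1 : (1 : ℝ) < p := by exact_mod_cast hp.out.one_lt
  have hcauchy : ∀ i j, ∃ e : ℤ_[p],
      Tendsto (fun m => (Φ ^ (m !)) i j) atTop (nhds e) := by
    intro i j
    refine cauchySeq_tendsto_of_complete ?_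
    rw [Metric.cauchySeq_iff']
    intro ε hε
    obtain ⟨k, hk⟩ : ∃ k : ℕ, ((p:ℝ)⁻¹) ^ k < ε := by
      apply exists_pow_lt_of_lt_one hε
      rw [inv_lt_one_iff₀]; right; exact hp1
    obtain ⟨a, T, hT0, hper⟩ := aux_period d Φ k
    refine ⟨max a T, ?_⟩
    intro n hn
    have hfac : ∀ m, max a T ≤ m → a ≤ m ! ∧ T ∣ m ! := by
      intro m hm
      constructor
      · exact le_trans (le_trans (le_max_left a T) hm) (Nat.self_le_factorial m)
      · exact Nat.dvd_factorial hT0 (le_trans (le_max_right a T) hm)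
    have h1 := hper (n !) ((max a T)!) (hfac n hn).1 (hfac _ le_rfl).1
      (hfac n hn).2 (hfac _ le_rfl).2 i j
    have h2 : dist ((Φ ^ (n !)) i j) ((Φ ^ ((max a T)!)) i j) ≤ ((p:ℝ)⁻¹) ^ k := by
      rw [dist_eq_norm]
      have := aux_norm_le_of_dvd h1
      simpa [Matrix.sub_apply] using this
    exact lt_of_le_of_lt h2 hk
  choose Efun hE using hcauchy
  set E : Matrix (Fin d) (Fin d) ℤ_[p] := Matrix.of Efun with hEdef
  have hEapp : ∀ i j, E i j = Efun i j := fun i j => rfl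
  have hclose : ∀ k : ℕ, ∃ m₀ : ℕ,  ∀ m, m₀ ≤ m →
      (∀ i j, (p : ℤ_[p]) ^ k ∣ (Φ ^ (m !) - E) i j) ∧
      (∀ i j, (p : ℤ_[p]) ^ k ∣ (Φ ^ (m ! + m !) - Φ ^ (m !)) i j) := by
    intro k
    obtain ⟨a, T, hT0, hper⟩ := aux_period d Φ k
    have hfac : ∀ m, max a T ≤ m → a ≤ m ! ∧ T ∣ m ! := by
      intro m hm
      constructor
      · exact le_trans (le_trans (le_max_left a T) hm) (Nat.self_le_factorial m)
      · exact Nat.dvd_factorial hT0 (le_trans (le_max_right a T) hm)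
    refine ⟨max a T, fun m hm => ⟨?_, ?_⟩⟩
    · intro i j
      have htd : Tendsto (fun m' => ((Φ ^ (m' !)) i j - (Φ ^ (m !)) i j)) atTop
          (nhds (Efun i j - (Φ ^ (m !)) i j)) := (hE i j).sub_const _
      have hmem : ∀ m', max a T ≤ m' →
          ((Φ ^ (m' !)) i j - (Φ ^ (m !)) i j) ∈ {x : ℤ_[p] | (p : ℤ_[p]) ^ k ∣ x} := by
        intro m' hm'
        have := hper (m' !) (m !) (hfac m' hm').1 (hfac m hm).1 (hfac m' hm').2 (hfac m hm).2 i j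
        simpa [Matrix.sub_apply] using this
      have hlim := (aux_closed_dvd k).mem_of_tendsto htd
        (Filter.eventually_atTop.mpr ⟨max a T, hmem⟩)
      have : (p : ℤ_[p]) ^ k ∣ (Efun i j - (Φ ^ (m !)) i j) := hlim
      have := dvd_neg.mpr this
      simpa [Matrix.sub_apply, hEapp, neg_sub] using this
    · intro i j
      exact hper (m ! + m !) (m !) (le_trans (hfac m hm).1 (Nat.le_add_right _ _))
        (hfac m hm).1 (dvd_add (hfac m hm).2 (hfac m hm).2) (hfac m hm).2 i j
  have hdvdall : ∀ (X : Matrix (Fin d) (Fin d) ℤ_[p]),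
      (∀ k : ℕ, ∀ i j, (p : ℤ_[p]) ^ k ∣ X i j) → X = 0 := by
    intro X hX
    funext i j
    exact aux_eq_zero_of_dvd_all (fun k => hX k i j)
  have hEE : E * E = E := by
    have : E * E - E = 0 := by
      apply hdvdall
      intro k i j
      obtain ⟨m₀, hm₀⟩ := hclose k
      set u := Φ ^ (m₀ !) with hu
      have h1 : ∀ i j, (p : ℤ_[p]) ^ k ∣ (u - E) i j := (hm₀ m₀ le_rfl).1
      have h2 : ∀ i j, (p : ℤ_[p]) ^ k ∣ (u * u - u) i j := by
        have := (hm₀ m₀ le_rfl).2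
        intro i j
        have h3 := this i j
        rwa [pow_add] at h3
      have hid : E * E - E = (E - u) * E + u * (E - u) + (u * u - u) + (u - E) := by
        noncomm_ring
      rw [hid]
      have hneg : ∀ i j, (p : ℤ_[p]) ^ k ∣ (E - u) i j := by
        intro i j
        have := dvd_neg.mpr (h1 i j)
        simpa [Matrix.sub_apply, neg_sub] using this
      simp only [Matrix.add_apply]
      exact dvd_add (dvd_add (dvd_add (aux_matmul_dvd_left hneg i j)
        (aux_matmul_dvd_right hneg i j)) (h2 i j)) (h1 i j)
    rw [sub_eq_zero] at this
    exact this
  have hcomm : Φ * E = E * Φ := by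
    have : Φ * E - E * Φ = 0 := by
      apply hdvdall
      intro k i j
      obtain ⟨m₀, hm₀⟩ := hclose k
      set u := Φ ^ (m₀ !) with hu
      have h1 : ∀ i j, (p : ℤ_[p]) ^ k ∣ (u - E) i j := (hm₀ m₀ le_rfl).1
      have hneg : ∀ i j, (p : ℤ_[p]) ^ k ∣ (E - u) i j := by
        intro i j
        have := dvd_neg.mpr (h1 i j)
        simpa [Matrix.sub_apply, neg_sub] using this
      have hcu : Φ * u = u * Φ := by
        exact (Commute.refl Φ).pow_right _ |>.eq
      have hid : Φ * E - E * Φ = Φ * (E - u) + (u - E) * Φ + (Φ * u - u * Φ) := by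
        noncomm_ring
      rw [hid, hcu, sub_self, add_zero]
      simp only [Matrix.add_apply]
      exact dvd_add (aux_matmul_dvd_right hneg i j) (aux_matmul_dvd_left h1 i j)
    rw [sub_eq_zero] at this
    exact this
  refine ⟨E, hEE, hcomm, ?_⟩
  intro k
  obtain ⟨m₀, hm₀⟩ := hclose k
  exact ⟨m₀ !, Nat.one_le_iff_ne_zero.mpr (Nat.factorial_ne_zero m₀), (hm₀ m₀ le_rfl).1⟩


open Finset

variable {R : Type*} [CommRing R]

lemma aux_comm_idem_pow {e : R} (he : e * e = e) (x : R) (n : ℕ) :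
    (e + x) ^ n = x ^ n + e * ((1 + x) ^ n - x ^ n) := by
  induction n with
  | zero => simp
  | succ n ih =>
      rw [pow_succ, ih]
      have h1 : (1 + x) ^ (n + 1) = (1 + x) ^ n * (1 + x) := pow_succ _ _
      have h2 : x ^ (n + 1) = x ^ n * x := pow_succ _ _
      rw [h1, h2]
      linear_combination ((1 + x) ^ n - x ^ n) * he

lemma aux_comm_X {e : R} (he : e * e = e) (x : R) (n : ℕ) :
    (e + x) ^ n - 1 = e * ((1 + x) ^ n - 1) + (1 - e) * (x ^ n - 1) := by
  have := aux_comm_idem_pow he x n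
  linear_combination this

lemma aux_comm_factor {e : R} (he : e * e = e) (a b : R) :
    (e * a + (1 - e)) * (e + (1 - e) * b) = e * a + (1 - e) * b := by
  linear_combination (a - a * b - 1 + b) * he

lemma aux_comm_mult {e : R} (he : e * e = e) (y z : R) :
    (e * y + (1 - e)) * (e * z + (1 - e)) = e * (y * z) + (1 - e) := by
  linear_combination (y * z - y - z + 1) * he

lemma aux_comm_compl {e : R} (he : e * e = e) (n : ℕ) :
    ((n : R) * e + (1 - e)) * ((n : R) * (1 - e) + e) = (n : R) := by
  linear_combination (-((n : R) - 1) ^ 2) * he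

lemma aux_comm_sq {e : R} (he : e * e = e) :
    (2 * e - 1) * (2 * e - 1) = 1 := by
  linear_combination 4 * he

/-- abstract binomial factorization `(1+π²c)ⁿ - 1 = n·(π²c)·(1 + π·v)`. -/
lemma aux_binom (π c : R) (n : ℕ) (hn : 1 ≤ n) (ρ : ℕ → R)
    (hr : ∀ k, ((k + 2 : ℕ) : R) * (π * ρ k) = π ^ (2 * k + 2)) :
    (1 + π ^ 2 * c) ^ n - 1 =
      (n : R) * ((π ^ 2 * c) *
        (1 + π * (∑ k ∈ range (n - 1), (((n - 1).choose (k + 1) : ℕ) : R) * ρ k * c ^ (k + 1)))) := by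
  have hbin : (1 + π ^ 2 * c) ^ n =
      ∑ k ∈ range (n + 1), (π ^ 2 * c) ^ k * ((n.choose k : ℕ) : R) := by
    rw [add_comm (1 : R) (π ^ 2 * c), add_pow]
    congr 1
    funext k
    rw [one_pow, mul_one]
  rw [hbin, Finset.sum_range_succ']
  simp only [pow_zero, Nat.choose_zero_right, Nat.cast_one, one_mul]
  rw [add_sub_cancel_right]
  -- now `∑ k ∈ range n, (π²c)^(k+1) * C(n,k+1) = RHS`
  obtain ⟨m, rfl⟩ : ∃ m, n = m + 1 := ⟨n - 1, by omega⟩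
  rw [Finset.sum_range_succ']
  simp only [Nat.add_sub_cancel]
  rw [mul_add, mul_one]
  have hfirst : (π ^ 2 * c) ^ (0 + 1) * (((m + 1).choose (0 + 1) : ℕ) : R)
      = ((m + 1 : ℕ) : R) * (π ^ 2 * c) := by
    simp [Nat.choose_one_right]; ring
  rw [hfirst]
  rw [mul_add, Finset.mul_sum, add_comm]
  congr 1
  rw [Finset.mul_sum, Finset.mul_sum]
  apply Finset.sum_congr rfl
  intro k _
  have hchoose : (m + 1) * m.choose (k + 1) = (m + 1).choose (k + 2) * (k + 2) := by
    exact_mod_cast Nat.add_one_mul_choose_eq m (k + 1)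
  have hcast : ((m + 1 : ℕ) : R) * ((m.choose (k + 1) : ℕ) : R)
      = (((m + 1).choose (k + 2) : ℕ) : R) * ((k + 2 : ℕ) : R) := by
    exact_mod_cast congrArg (Nat.cast : ℕ → R) hchoose
  have hr' := hr k
  push_cast at hcast hr' ⊢
  linear_combination (-(π ^ 3 * c ^ (k + 2) * ρ k)) * hcast +
    (-((((m + 1).choose (k + 2) : ℕ) : R)) * π ^ 2 * c ^ (k + 2)) * hr'


variable {p : ℕ} [hp : Fact p.Prime]

open Finset

lemma aux_isUnit_of_not_dvdP {k : ℕ} (hk : ¬ p ∣ k) : IsUnit (k : ℤ_[p]) := by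
  rw [PadicInt.isUnit_iff]
  have h1 : ‖(k : ℤ_[p])‖ ≤ 1 := PadicInt.norm_le_one _
  have h2 : ¬ ‖(k : ℤ_[p])‖ < 1 := by
    rw [show ((k:ℤ_[p])) = ((k : ℤ) : ℤ_[p]) by push_cast; ring,
      PadicInt.norm_int_lt_one_iff_dvd]
    exact_mod_cast hk
  linarith

/-- `‖n‖_p ≥ 1/n` for `n ≥ 1`. -/
lemma aux_norm_natCast_ge {n : ℕ} (hn : 1 ≤ n) : ((n : ℝ))⁻¹ ≤ ‖(n : ℤ_[p])‖ := by
  set v := padicValNat p n with hv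
  obtain ⟨n', hn'⟩ : ∃ n', n = p ^ v * n' := pow_padicValNat_dvd
  have hn'0 : n' ≠ 0 := by
    intro h0; rw [h0, Nat.mul_zero] at hn'; omega
  have hpn' : ¬ p ∣ n' := by
    intro hdvd
    have : p ^ (v + 1) ∣ n := by
      rw [hn', pow_succ]
      exact Nat.mul_dvd_mul dvd_rfl hdvd
    have := (padicValNat_dvd_iff_le (p := p) (a := n) (n := v + 1) (by omega)).mp this
    omega
  have hnorm : ‖(n : ℤ_[p])‖ = ((p : ℝ))⁻¹ ^ v := by
    have : ((n : ℕ) : ℤ_[p]) = (p : ℤ_[p]) ^ v * (n' : ℤ_[p]) := by rw [hn']; push_cast; ring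
    rw [this, norm_mul, PadicInt.isUnit_iff.mp (aux_isUnit_of_not_dvdP hpn'),
      mul_one, PadicInt.norm_p_pow]
    rw [zpow_neg, inv_pow, zpow_natCast]
  rw [hnorm]
  have hple : (p : ℝ) ^ v ≤ (n : ℝ) := by
    have : p ^ v ≤ n := Nat.le_of_dvd (by omega) ⟨n', hn'⟩
    exact_mod_cast this
  have hpR : (0:ℝ) < (p:ℝ) := by
    have := hp.out.two_le; positivity
  have hp0 : (0:ℝ) < (p:ℝ) ^ v := by positivity
  rw [inv_pow, ← inv_pow, inv_pow]
  exact inv_anti₀ hp0 hple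

/-- a matrix whose reduction mod `p` has invertible determinant has `‖det‖ = 1`. -/
lemma aux_det_norm_one {d : ℕ} (X : Matrix (Fin d) (Fin d) ℤ_[p])
    (hX : ((PadicInt.toZMod (p := p)).mapMatrix X).det ≠ 0) : ‖X.det‖ = 1 := by
  by_contra hne
  have h1 : ‖X.det‖ < 1 := lt_of_le_of_ne (PadicInt.norm_le_one _) hne
  have h2 : ¬ IsUnit X.det := by
    rw [PadicInt.isUnit_iff]; exact hne
  have h3 : PadicInt.toZMod X.det = 0 := by
    have hmem : X.det ∈ RingHom.ker (PadicInt.toZMod (p := p)) := by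
      rw [PadicInt.ker_toZMod]
      exact (IsLocalRing.mem_maximalIdeal X.det).mpr (mem_nonunits_iff.mpr h2)
    rwa [RingHom.mem_ker] at hmem
  apply hX
  rw [← RingHom.map_det, h3]


section NC
variable {A : Type*} [Ring A]

lemma nc_sub_idem {e : A} (he : e * e = e) : (1 - e) * (1 - e) = 1 - e := by
  rw [mul_sub, mul_one, sub_mul, one_mul, he]; abel

lemma nc_sub_mul_e {e : A} (he : e * e = e) : (1 - e) * e = 0 := by
  rw [sub_mul, one_mul, he, sub_self]

lemma nc_e_mul_sub {e y : A} (he : e * e = e) (hy : e * y = y * e) :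
    (e * y) * (1 - e) = 0 := by
  rw [mul_sub, mul_one, mul_assoc, ← hy, ← mul_assoc, he, sub_self]

lemma nc_mult {e y z : A} (he : e * e = e) (hy : e * y = y * e) :
    (e * y + (1 - e)) * (e * z + (1 - e)) = e * (y * z) + (1 - e) := by
  have h1 : (e * y) * (e * z) = e * (y * z) := by
    calc (e * y) * (e * z) = (y * e) * (e * z) := by rw [hy]
      _ = y * ((e * e) * z) := by rw [mul_assoc, ← mul_assoc e e z]
      _ = y * (e * z) := by rw [he]
      _ = (y * e) * z := by rw [← mul_assoc]
      _ = (e * y) * z := by rw [hy]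
      _ = e * (y * z) := by rw [mul_assoc]
  have h2 := nc_e_mul_sub he hy
  have h3 : (1 - e) * (e * z) = 0 := by rw [← mul_assoc, nc_sub_mul_e he, zero_mul]
  have h4 := nc_sub_idem he
  rw [add_mul, mul_add, mul_add, h1, h2, h3, h4, add_zero, zero_add]

lemma nc_factor {e a b : A} (he : e * e = e) (ha : e * a = a * e) :
    (e * a + (1 - e)) * (e + (1 - e) * b) = e * a + (1 - e) * b := by
  have h1 : (e * a) * e = e * a := by rw [mul_assoc, ← ha, ← mul_assoc, he]
  have h2 : (e * a) * ((1 - e) * b) = 0 := by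
    rw [← mul_assoc, nc_e_mul_sub he ha, zero_mul]
  have h3 : (1 - e) * e = 0 := nc_sub_mul_e he
  have h4 : (1 - e) * ((1 - e) * b) = (1 - e) * b := by
    rw [← mul_assoc, nc_sub_idem he]
  rw [add_mul, mul_add, mul_add, h1, h2, h3, h4, add_zero, zero_add]

lemma nc_compl {e ν : A} (he : e * e = e) (hν : ∀ x, ν * x = x * ν) :
    (ν * e + (1 - e)) * (ν * (1 - e) + e) = ν := by
  have he' : e * (1 - e) = 0 := by rw [mul_sub, mul_one, he, sub_self]
  have h1 : (ν * e) * (ν * (1 - e)) = 0 := by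
    calc (ν * e) * (ν * (1 - e)) = ν * (e * (ν * (1 - e))) := by rw [mul_assoc]
      _ = ν * ((e * ν) * (1 - e)) := by rw [mul_assoc e ν (1 - e)]
      _ = ν * ((ν * e) * (1 - e)) := by rw [← hν e]
      _ = ν * (ν * (e * (1 - e))) := by rw [mul_assoc ν e (1 - e)]
      _ = 0 := by rw [he', mul_zero, mul_zero]
  have h2 : (ν * e) * e = ν * e := by rw [mul_assoc, he]
  have h3 : (1 - e) * (ν * (1 - e)) = ν * ((1 - e) * (1 - e)) := by
    rw [← mul_assoc, ← hν (1 - e), mul_assoc]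
  have h4 : (1 - e) * e = 0 := nc_sub_mul_e he
  rw [add_mul, mul_add, mul_add, h1, h2, h3, h4, nc_sub_idem he]
  rw [zero_add, add_zero, ← mul_add]
  have : e + (1 - e) = 1 := by abel
  rw [this, mul_one]

lemma nc_pow_idem {e x : A} (he : e * e = e) (hx : e * x = x * e) (n : ℕ) :
    (e + x) ^ n = x ^ n + e * ((1 + x) ^ n - x ^ n) := by
  have cex : Commute e x := hx
  induction n with
  | zero => simp
  | succ n ih =>
      have cB : Commute e (x ^ n) := cex.pow_right n
      have cA : Commute e ((1 + x) ^ n) := ((Commute.one_right e).add_right cex).pow_right n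
      have cD : Commute e ((1 + x) ^ n - x ^ n) := cA.sub_right cB
      have hDe : (e * ((1 + x) ^ n - x ^ n)) * e = e * ((1 + x) ^ n - x ^ n) := by
        rw [mul_assoc, ← cD.eq, ← mul_assoc, he]
      calc (e + x) ^ (n + 1) = (e + x) ^ n * (e + x) := pow_succ _ _
        _ = (x ^ n + e * ((1 + x) ^ n - x ^ n)) * (e + x) := by rw [ih]
        _ = x ^ n * e + x ^ n * x + ((e * ((1 + x) ^ n - x ^ n)) * e
              + (e * ((1 + x) ^ n - x ^ n)) * x) := by
            rw [add_mul, mul_add, mul_add]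
        _ = e * x ^ n + x ^ n * x + (e * ((1 + x) ^ n - x ^ n)
              + e * (((1 + x) ^ n - x ^ n) * x)) := by
            rw [← cB.eq, hDe, mul_assoc]
        _ = e * x ^ n + x ^ (n + 1) + (e * (1 + x) ^ n - e * x ^ n
              + (e * ((1 + x) ^ n * x) - e * x ^ (n + 1))) := by
            simp only [mul_sub, sub_mul, ← pow_succ]
        _ = x ^ (n + 1) + e * ((1 + x) ^ (n + 1) - x ^ (n + 1)) := by
            rw [pow_succ (1 + x) n, mul_add ((1 + x) ^ n) 1 x, mul_one, mul_sub, mul_add]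
            abel

end NC

lemma aux_det_norm_one_sq {p : ℕ} [hp : Fact p.Prime] {d : ℕ}
    (X G Y : Matrix (Fin d) (Fin d) ℤ_[p])
    (hX : X = G + (p : ℤ_[p]) • Y) (hG : G * G = 1) : ‖X.det‖ = 1 := by
  apply aux_det_norm_one
  set f : Matrix (Fin d) (Fin d) ℤ_[p] →+* Matrix (Fin d) (Fin d) (ZMod p) :=
    (PadicInt.toZMod (p := p)).mapMatrix with hf
  have hmap0 : f ((p : ℤ_[p]) • Y) = 0 := by
    funext i j
    show PadicInt.toZMod (((p : ℤ_[p]) • Y) i j) = 0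
    rw [Matrix.smul_apply, smul_eq_mul, map_mul]
    rw [show (PadicInt.toZMod (p := p) ((p : ℕ) : ℤ_[p])) = 0 by
      rw [map_natCast]; exact ZMod.natCast_self p]
    ring
  have hfX : f X = f G := by rw [hX, map_add, hmap0, add_zero]
  have hsq : (f X).det * (f X).det = 1 := by
    rw [hfX, ← Matrix.det_mul, ← map_mul, hG, map_one, Matrix.det_one]
  intro h0
  rw [h0, mul_zero] at hsq
  exact zero_ne_one hsq

lemma aux_norm_pow {p : ℕ} [hp : Fact p.Prime] (z : ℤ_[p]) (m : ℕ) : ‖z ^ m‖ = ‖z‖ ^ m := by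
  induction m with
  | zero => simp
  | succ m ih => rw [pow_succ, pow_succ, norm_mul, ih]

/-- For a `d×d` matrix `Φ` over `ℤ_p` with `det(Φⁿ - Id) ≠ 0` for all `n ≥ 1`,
there is a constant `c > 0` with `‖det(Φⁿ - Id)‖ ≥ c / n^d` for all `n ≥ 1`
(and trivially `‖det(Φⁿ - Id)‖ ≤ 1`). -/
theorem padic_det_pow_sub_one_lower_bound (p : ℕ) [Fact p.Prime] (d : ℕ) (hd : 1 ≤ d)
    (Φ : Matrix (Fin d) (Fin d) ℤ_[p])
    (h : ∀ n : ℕ, 1 ≤ n → (Φ ^ n - 1).det ≠ 0) :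
    ∃ c : ℝ, 0 < c ∧ ∀ n : ℕ, 1 ≤ n →
      c / (n : ℝ) ^ d ≤ ‖(Φ ^ n - 1).det‖ ∧ ‖(Φ ^ n - 1).det‖ ≤ 1 := by
  obtain ⟨E, hEE, hΦE, hNall⟩ := aux_exists_idem d Φ
  obtain ⟨N, hN1, hNd⟩ := hNall 2
  -- extract the matrix Γ with Φ^N = E + p² • Γ
  choose Γfun hΓfun using fun i j => (hNd i j)
  set Γ : Matrix (Fin d) (Fin d) ℤ_[p] := Matrix.of Γfun with hΓdef
  set πM : Matrix (Fin d) (Fin d) ℤ_[p] := ((p : ℕ) : Matrix (Fin d) (Fin d) ℤ_[p]) with hπMdef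
  have hπM_one : πM = ((p : ℕ) : ℤ_[p]) • (1 : Matrix (Fin d) (Fin d) ℤ_[p]) := by
    rw [hπMdef, Nat.cast_smul_eq_nsmul, nsmul_eq_mul, mul_one]
  have hπM_central : ∀ X : Matrix (Fin d) (Fin d) ℤ_[p], πM * X = X * πM := by
    intro X; rw [hπMdef]; exact (Nat.cast_commute p X).eq
  have hπM_smul : ∀ X : Matrix (Fin d) (Fin d) ℤ_[p], πM * X = (p : ℤ_[p]) • X := by
    intro X; rw [hπM_one, smul_mul_assoc, one_mul]
  set Q : Matrix (Fin d) (Fin d) ℤ_[p] := πM ^ 2 * Γ with hQdef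
  have hQsmul : Q = ((p : ℤ_[p]) ^ 2) • Γ := by
    rw [hQdef, hπM_one, smul_pow, one_pow, smul_mul_assoc, one_mul]
  have hΦN : Φ ^ N = E + Q := by
    rw [hQsmul]
    funext i j
    have h1 := hΓfun i j
    rw [Matrix.sub_apply] at h1
    change (Φ ^ N) i j = E i j + (p : ℤ_[p]) ^ 2 * Γfun i j
    linear_combination h1
  have hp2 : ((p : ℤ_[p]) ^ 2) ≠ 0 := by
    apply pow_ne_zero
    exact Nat.cast_ne_zero.mpr (Fact.out : p.Prime).ne_zero
  -- E commutes with Γ and with Q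
  have hComΦE : Commute Φ E := hΦE
  have hEΦN : E * Φ ^ N = Φ ^ N * E := ((hComΦE).pow_left N).symm.eq
  have hEΓ : E * Γ = Γ * E := by
    have h3 : E * (((p : ℤ_[p]) ^ 2) • Γ) = (((p : ℤ_[p]) ^ 2) • Γ) * E := by
      have hPE : ((p : ℤ_[p]) ^ 2) • Γ = Φ ^ N - E := by rw [hΦN, hQsmul]; abel
      rw [hPE, Matrix.mul_sub, Matrix.sub_mul, hEΦN, hEE]
    rw [Matrix.mul_smul, Matrix.smul_mul] at h3
    funext i j
    have h4 := congrFun (congrFun h3 i) j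
    rw [Matrix.smul_apply, Matrix.smul_apply, smul_eq_mul, smul_eq_mul] at h4
    exact mul_left_cancel₀ hp2 h4
  have hπ2 : ∀ X : Matrix (Fin d) (Fin d) ℤ_[p], πM ^ 2 * X = X * πM ^ 2 := by
    intro X
    have hc : Commute πM X := hπM_central X
    exact (hc.pow_left 2).eq
  have hEQ : E * Q = Q * E := by
    rw [hQdef, ← mul_assoc, ← hπ2 E, mul_assoc, hEΓ, ← mul_assoc]
  -- p-adic coefficients for the binomial factorization
  have hρex : ∀ k : ℕ, ∃ ρ0 : ℤ_[p],
      ((k + 2 : ℕ) : ℤ_[p]) * (((p : ℕ) : ℤ_[p]) * ρ0) = ((p : ℕ) : ℤ_[p]) ^ (2 * k + 2) := by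
    intro k
    obtain ⟨r, hr1, hr2⟩ := aux_exists_r (p := p) (k + 1)
    obtain ⟨ρ0, hρ0⟩ := hr2 (by omega)
    refine ⟨ρ0, ?_⟩
    rw [← hρ0]
    have h22 : 2 * (k + 1) = 2 * k + 2 := by ring
    rw [← h22]
    convert hr1 using 3
    all_goals omega
  choose ρZ hρZ using hρex
  -- units of norm one
  have hunit3 : ∀ Y : Matrix (Fin d) (Fin d) ℤ_[p],
      ‖(E * (1 + πM * Y) + (1 - E)).det‖ = 1 := by
    intro Y
    apply aux_det_norm_one_sq _ 1 (E * Y) _ (one_mul 1)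
    rw [mul_add, mul_one, ← mul_assoc, ← hπM_central E, mul_assoc, hπM_smul]
    try abel
  have hunit4 : ∀ n : ℕ, 1 ≤ n → ‖(E + (1 - E) * (Q ^ n - 1)).det‖ = 1 := by
    intro n hn
    apply aux_det_norm_one_sq _ (E + E - 1) ((1 - E) * (πM ^ (2 * n - 1) * Γ ^ n)) _ ?hG
    case hG =>
      have h4 : (E + E - 1) * (E + E - 1) = 4 * (E * E) - 4 * E + 1 := by noncomm_ring
      rw [h4, hEE]
      noncomm_ring
    have hQn : Q ^ n = πM * (πM ^ (2 * n - 1) * Γ ^ n) := by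
      have hcQ : Commute (πM ^ 2) Γ := hπ2 Γ
      have hsplit : πM ^ (2 * n) = πM * πM ^ (2 * n - 1) := by
        rw [← _root_.pow_succ']
        congr 1
        omega
      rw [hQdef, hcQ.mul_pow, ← pow_mul, hsplit, mul_assoc]
    rw [hQn, mul_sub, mul_one, ← mul_assoc, ← hπM_central (1 - E), mul_assoc, hπM_smul]
    try abel
  set c₀ : ℤ_[p] := (E * Q + (1 - E)).det with hc₀def
  -- the key norm identity
  have hkey : ∀ n : ℕ, 1 ≤ n →
      ‖(Φ ^ (N * n) - 1).det‖
        = ‖(E * ((n : ℕ) : Matrix (Fin d) (Fin d) ℤ_[p]) + (1 - E)).det‖ * ‖c₀‖ := by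
    intro n hn
    have hrP : ∀ k : ℕ, ((k + 2 : ℕ) : Polynomial ℤ_[p]) *
        (Polynomial.C ((p : ℕ) : ℤ_[p]) * Polynomial.C (ρZ k))
          = Polynomial.C ((p : ℕ) : ℤ_[p]) ^ (2 * k + 2) := by
      intro k
      have hc := congrArg (Polynomial.C (R := ℤ_[p])) (hρZ k)
      rw [map_mul, map_mul, map_pow, map_natCast] at hc
      exact hc
    have hP := aux_binom (Polynomial.C ((p : ℕ) : ℤ_[p])) (Polynomial.X) n hn
      (fun k => Polynomial.C (ρZ k)) hrP
    have hM := congrArg (Polynomial.aeval (R := ℤ_[p]) Γ) hP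
    simp only [map_add, map_sub, map_mul, map_pow, map_one, map_natCast,
      Polynomial.aeval_X, Polynomial.aeval_C, map_sum] at hM
    rw [← hπMdef] at hM
    rw [← hQdef] at hM
    obtain ⟨Y, hM'⟩ : ∃ Y : Matrix (Fin d) (Fin d) ℤ_[p],
        (1 + Q) ^ n - 1
          = ((n : ℕ) : Matrix (Fin d) (Fin d) ℤ_[p]) * (Q * (1 + πM * Y)) := ⟨_, hM⟩
    clear hM
    -- commutation facts
    have cEQ : Commute E Q := hEQ
    have cA : Commute E ((1 + Q) ^ n - 1) :=
      (((Commute.one_right E).add_right cEQ).pow_right n).sub_right (Commute.one_right E)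
    have hyn : E * ((n : ℕ) : Matrix (Fin d) (Fin d) ℤ_[p])
        = ((n : ℕ) : Matrix (Fin d) (Fin d) ℤ_[p]) * E := ((Nat.cast_commute n E).symm).eq
    -- main factorization
    have hs1 := nc_pow_idem hEE hEQ n
    have hs2 : Φ ^ (N * n) - 1
        = E * ((1 + Q) ^ n - 1) + (1 - E) * (Q ^ n - 1) := by
      rw [pow_mul, hΦN, hs1]
      noncomm_ring
    have hs3 : Φ ^ (N * n) - 1
        = (E * ((1 + Q) ^ n - 1) + (1 - E)) * (E + (1 - E) * (Q ^ n - 1)) := by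
      rw [hs2, nc_factor hEE cA.eq]
    have hs4 : E * ((1 + Q) ^ n - 1) + (1 - E)
        = ((E * ((n : ℕ) : Matrix (Fin d) (Fin d) ℤ_[p]) + (1 - E)) *
            ((E * Q + (1 - E)) * (E * (1 + πM * Y) + (1 - E)))) := by
      rw [hM', ← nc_mult hEE hyn, ← nc_mult hEE hEQ]
    rw [hs3, hs4, Matrix.det_mul, Matrix.det_mul, Matrix.det_mul,
      norm_mul, norm_mul, norm_mul,
      hunit3 Y, hunit4 n hn, hc₀def]
    ring
  -- c₀ is nonzero
  have hc₀ne : c₀ ≠ 0 := by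
    intro h0
    have hk1 := hkey 1 le_rfl
    rw [mul_one, h0, norm_zero, mul_zero, norm_eq_zero] at hk1
    exact h N hN1 hk1
  -- lower bound for the first determinant factor
  have hF1 : ∀ n : ℕ, 1 ≤ n → ((n : ℝ))⁻¹ ^ d
      ≤ ‖(E * ((n : ℕ) : Matrix (Fin d) (Fin d) ℤ_[p]) + (1 - E)).det‖ := by
    intro n hn
    have hνc : ∀ X : Matrix (Fin d) (Fin d) ℤ_[p],
        ((n : ℕ) : Matrix (Fin d) (Fin d) ℤ_[p]) * X
          = X * ((n : ℕ) : Matrix (Fin d) (Fin d) ℤ_[p]) := by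
      intro X; exact (Nat.cast_commute n X).eq
    have hcompl := nc_compl hEE hνc
    have hdet_n : (((n : ℕ) : Matrix (Fin d) (Fin d) ℤ_[p])).det = ((n : ℕ) : ℤ_[p]) ^ d := by
      have hcast : (((n : ℕ) : ℤ_[p]) • (1 : Matrix (Fin d) (Fin d) ℤ_[p]))
          = ((n : ℕ) : Matrix (Fin d) (Fin d) ℤ_[p]) := by
        rw [Nat.cast_smul_eq_nsmul, nsmul_eq_mul, mul_one]
      rw [← hcast, Matrix.det_smul, Matrix.det_one, mul_one, Fintype.card_fin]
    have hprod := congrArg Matrix.det hcompl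
    rw [Matrix.det_mul, hdet_n] at hprod
    have hnorm := congrArg norm hprod
    rw [norm_mul, aux_norm_pow] at hnorm
    have hle1 : ‖(((n : ℕ) : Matrix (Fin d) (Fin d) ℤ_[p]) * (1 - E) + E).det‖ ≤ 1 :=
      PadicInt.norm_le_one _
    have hnn : ((n : ℝ))⁻¹ ^ d ≤ ‖((n : ℕ) : ℤ_[p])‖ ^ d := by
      apply pow_le_pow_left₀ (by positivity) (aux_norm_natCast_ge hn)
    have heq : E * ((n : ℕ) : Matrix (Fin d) (Fin d) ℤ_[p]) + (1 - E)
        = ((n : ℕ) : Matrix (Fin d) (Fin d) ℤ_[p]) * E + (1 - E) := by rw [hνc E]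
    rw [heq]
    nlinarith [norm_nonneg ((((n : ℕ) : Matrix (Fin d) (Fin d) ℤ_[p]) * E + (1 - E)).det),
      norm_nonneg ((((n : ℕ) : Matrix (Fin d) (Fin d) ℤ_[p]) * (1 - E) + E).det),
      hnorm, hle1, hnn]
  -- final assembly
  refine ⟨‖c₀‖, norm_pos_iff.mpr hc₀ne, ?_⟩
  intro n hn
  refine ⟨?_, PadicInt.norm_le_one _⟩
  have hgeom := geom_sum_mul (Φ ^ n) N
  have hdetdiv : (Φ ^ (N * n) - 1).det
      = (∑ i ∈ Finset.range N, (Φ ^ n) ^ i).det * (Φ ^ n - 1).det := by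
    rw [← Matrix.det_mul, hgeom, ← pow_mul, Nat.mul_comm]
  have h1 : ‖(Φ ^ (N * n) - 1).det‖ ≤ ‖(Φ ^ n - 1).det‖ := by
    rw [hdetdiv, norm_mul]
    exact mul_le_of_le_one_left (norm_nonneg _) (PadicInt.norm_le_one _)
  have h2 : ‖c₀‖ / (n : ℝ) ^ d ≤ ‖(Φ ^ (N * n) - 1).det‖ := by
    rw [hkey n hn]
    have h3 := hF1 n hn
    have h4 : ‖c₀‖ / (n : ℝ) ^ d = ((n : ℝ))⁻¹ ^ d * ‖c₀‖ := by
      rw [div_eq_mul_inv, ← inv_pow]; ring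
    rw [h4]
    exact mul_le_mul_of_nonneg_right h3 (norm_nonneg _)
  linarith
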